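/- Let G be an m-uniform hypergraph and x ∈ C^n a vector with all entries of the form x_i = e^{2πi·α_i/m} with α_i integers. Then Q(G)x^{m-1} = 0 if and only if for every edge e of G, the sum ∑_{j∈e} α_j ≡ m/2 (mod m); in particular this is only possible when m is even. -/

import Mathlib

lemma exp_eq_neg_one_iff_modeq (m : ℕ) (hm : 0 < m) (s : ℤ) :
    Complex.exp (2 * Real.pi * Complex.I * s / m) = -1 ↔
      Int.ModEq (2 * (m : ℤ)) (2 * s) (m : ℤ) := by
  have hm0 : (m : ℂ) ≠ 0 := Nat.cast_ne_zero.mpr hm.ne'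
  have hpi : (Real.pi : ℂ) ≠ 0 := by exact_mod_cast Real.pi_ne_zero
  have hI : Complex.I ≠ 0 := Complex.I_ne_zero
  have key : Complex.exp (2 * Real.pi * Complex.I * s / m) = -1 ↔
      Complex.exp (2 * Real.pi * Complex.I * s / m + Real.pi * Complex.I) = 1 := by
    rw [Complex.exp_add, Complex.exp_pi_mul_I]
    constructor
    · intro h; rw [h]; ring
    · intro h; have := congrArg (· * (-1)) h; simpa using this
  rw [key, Complex.exp_eq_one_iff, Int.modEq_iff_dvd]
  constructor
  · rintro ⟨k, hk⟩
    have hc : (2 * s + m : ℂ) = 2 * k * m := by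
      field_simp at hk
      have h2 : (Real.pi : ℂ) * Complex.I * (2 * s + m) =
          (Real.pi : ℂ) * Complex.I * (2 * k * m) := by linear_combination (Real.pi * Complex.I) * hk
      exact mul_left_cancel₀ (mul_ne_zero hpi hI) h2
    have hz : (2 * s + m : ℤ) = 2 * k * m := by exact_mod_cast hc
    exact ⟨1 - k, by linarith⟩
  · rintro ⟨t, ht⟩
    refine ⟨1 - t, ?_⟩
    have hc : ((m : ℤ) - 2 * s : ℂ) = 2 * m * t := by exact_mod_cast congrArg (Int.cast : ℤ → ℂ) ht
    push_cast at hc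
    field_simp
    push_cast; linear_combination -hc


/-- For an m-uniform hypergraph `G` and a vector `x` with
`x i = exp(2πi·α_i/m)` (`α_i` integers), the signless Laplacian eigen-equation
`Q(G)x^{m-1} = 0`, which at vertex `i` reads
`deg(i)·x_i^{m-1} + ∑_{e ∋ i} ∏_{j ∈ e, j ≠ i} x_j = 0`, holds iff for every edge `e`,
`∑_{j ∈ e} α_j ≡ m/2 (mod m)` (expressed integrally as `2·∑_{j∈e} α_j ≡ m (mod 2m)`);
in particular, if `G` has an edge, this is only possible when `m` is even. -/
theorem first_signless_laplacian_eigenvector_characterization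
    (m n : ℕ) (hm : 0 < m) (E : Finset (Finset (Fin n))) (hU : ∀ e ∈ E, e.card = m)
    (α : Fin n → ℤ) (x : Fin n → ℂ)
    (hx : ∀ i, x i = Complex.exp (2 * Real.pi * Complex.I * (α i) / m)) :
    ((∀ i : Fin n, ((E.filter (fun e => i ∈ e)).card : ℂ) * x i ^ (m - 1) +
        (∑ e ∈ E.filter (fun e => i ∈ e), ∏ j ∈ e.erase i, x j) = 0) ↔
      ∀ e ∈ E, Int.ModEq (2 * (m : ℤ)) (2 * ∑ j ∈ e, α j) (m : ℤ)) ∧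
    (E.Nonempty →
      (∀ i : Fin n, ((E.filter (fun e => i ∈ e)).card : ℂ) * x i ^ (m - 1) +
        (∑ e ∈ E.filter (fun e => i ∈ e), ∏ j ∈ e.erase i, x j) = 0) →
      Even m) := by
  have hm0 : (m : ℂ) ≠ 0 := Nat.cast_ne_zero.mpr hm.ne'
  set w : Finset (Fin n) → ℂ :=
    fun e => Complex.exp (2 * Real.pi * Complex.I * (∑ j ∈ e, α j) / m) with hw
  have hxne : ∀ i, x i ≠ 0 := fun i => by rw [hx i]; exact Complex.exp_ne_zero _
  have hxm : ∀ i, x i ^ m = 1 := by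
    intro i
    rw [hx i, ← Complex.exp_nat_mul]
    have : (m : ℂ) * (2 * Real.pi * Complex.I * (α i) / m) = (α i) * (2 * Real.pi * Complex.I) := by
      field_simp
    rw [this, Complex.exp_int_mul_two_pi_mul_I]
  have hprod : ∀ e : Finset (Fin n), ∏ j ∈ e, x j = w e := by
    intro e
    simp only [hx, ← Complex.exp_sum]
    congr 1
    push_cast
    rw [Finset.mul_sum, Finset.sum_div]
  -- real part facts about w
  have hwre : ∀ e : Finset (Fin n), (w e).re = Real.cos (2 * Real.pi * (∑ j ∈ e, α j) / m) := by
    intro e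
    have : (2 * Real.pi * Complex.I * (∑ j ∈ e, α j) / m)
        = ((2 * Real.pi * (∑ j ∈ e, α j) / m : ℝ) : ℂ) * Complex.I := by push_cast; ring
    simp only [hw]; rw [this, Complex.exp_ofReal_mul_I_re]
  have hwim : ∀ e : Finset (Fin n), (w e).im = Real.sin (2 * Real.pi * (∑ j ∈ e, α j) / m) := by
    intro e
    have : (2 * Real.pi * Complex.I * (∑ j ∈ e, α j) / m)
        = ((2 * Real.pi * (∑ j ∈ e, α j) / m : ℝ) : ℂ) * Complex.I := by push_cast; ring
    simp only [hw]; rw [this, Complex.exp_ofReal_mul_I_im]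
  -- the vertex equation is equivalent to the sum of (1 + w e) being 0
  have hveq : ∀ i : Fin n,
      (((E.filter (fun e => i ∈ e)).card : ℂ) * x i ^ (m - 1) +
        (∑ e ∈ E.filter (fun e => i ∈ e), ∏ j ∈ e.erase i, x j) = 0) ↔
      (∑ e ∈ E.filter (fun e => i ∈ e), (1 + w e)) = 0 := by
    intro i
    have key : (((E.filter (fun e => i ∈ e)).card : ℂ) * x i ^ (m - 1) +
        (∑ e ∈ E.filter (fun e => i ∈ e), ∏ j ∈ e.erase i, x j)) * x i
        = ∑ e ∈ E.filter (fun e => i ∈ e), (1 + w e) := by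
      rw [add_mul, Finset.sum_mul, Finset.sum_add_distrib, Finset.sum_const, nsmul_eq_mul, mul_one]
      congr 1
      · rw [mul_assoc, ← pow_succ, Nat.sub_add_cancel hm, hxm i, mul_one]
      · apply Finset.sum_congr rfl
        intro e he
        have hie : i ∈ e := (Finset.mem_filter.mp he).2
        rw [Finset.prod_erase_mul _ _ hie, hprod]
    constructor
    · intro h; rw [← key, h, zero_mul]
    · intro h
      have := key.trans h
      rcases mul_eq_zero.mp this with h' | h'
      · exact h'
      · exact absurd h' (hxne i)
    -- equivalence of w e = -1 with the mod condition
  have hDw : ∀ e : Finset (Fin n), w e = -1 ↔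
      Int.ModEq (2 * (m : ℤ)) (2 * ∑ j ∈ e, α j) (m : ℤ) :=
    fun e => exp_eq_neg_one_iff_modeq m hm _
  constructor
  · constructor
    · intro H e heE
      have hcard := hU e heE
      have hene : e.Nonempty := Finset.card_pos.mp (hcard ▸ hm)
      obtain ⟨i, hie⟩ := hene
      have hsum := (hveq i).mp (H i)
      -- real parts
      have hre : ∑ e' ∈ E.filter (fun e' => i ∈ e'), (1 + (w e').re) = 0 := by
        have := congrArg Complex.re hsum
        simpa [Complex.re_sum] using this
      have hnn : ∀ e' ∈ E.filter (fun e' => i ∈ e'), 0 ≤ 1 + (w e').re := by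
        intro e' _
        rw [hwre]
        nlinarith [Real.neg_one_le_cos (2 * Real.pi * (∑ j ∈ e', α j) / m)]
      have heach := (Finset.sum_eq_zero_iff_of_nonneg hnn).mp hre
      have hemem : e ∈ E.filter (fun e' => i ∈ e') := Finset.mem_filter.mpr ⟨heE, hie⟩
      have hre1 : (w e).re = -1 := by have := heach e hemem; linarith
      have him0 : (w e).im = 0 := by
        rw [hwim]
        have hc : Real.cos (2 * Real.pi * (∑ j ∈ e, α j) / m) = -1 := by
          rw [← hwre]; exact hre1
        nlinarith [Real.sin_sq_add_cos_sq (2 * Real.pi * (∑ j ∈ e, α j) / m)]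
      have : w e = -1 := by
        apply Complex.ext <;> simp [hre1, him0]
      exact (hDw e).mp this
    · intro H i
      rw [hveq i]
      apply Finset.sum_eq_zero
      intro e he
      have heE := (Finset.mem_filter.mp he).1
      rw [(hDw e).mpr (H e heE)]
      ring
  · rintro ⟨e, heE⟩ H
    have hmod : Int.ModEq (2 * (m : ℤ)) (2 * ∑ j ∈ e, α j) (m : ℤ) := by
      -- reuse forward direction
      have hcard := hU e heE
      have hene : e.Nonempty := Finset.card_pos.mp (hcard ▸ hm)
      obtain ⟨i, hie⟩ := hene
      have hsum := (hveq i).mp (H i)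
      have hre : ∑ e' ∈ E.filter (fun e' => i ∈ e'), (1 + (w e').re) = 0 := by
        have := congrArg Complex.re hsum
        simpa [Complex.re_sum] using this
      have hnn : ∀ e' ∈ E.filter (fun e' => i ∈ e'), 0 ≤ 1 + (w e').re := by
        intro e' _
        rw [hwre]
        nlinarith [Real.neg_one_le_cos (2 * Real.pi * (∑ j ∈ e', α j) / m)]
      have heach := (Finset.sum_eq_zero_iff_of_nonneg hnn).mp hre
      have hemem : e ∈ E.filter (fun e' => i ∈ e') := Finset.mem_filter.mpr ⟨heE, hie⟩
      have hre1 : (w e).re = -1 := by have := heach e hemem; linarith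
      have him0 : (w e).im = 0 := by
        rw [hwim]
        have hc : Real.cos (2 * Real.pi * (∑ j ∈ e, α j) / m) = -1 := by
          rw [← hwre]; exact hre1
        nlinarith [Real.sin_sq_add_cos_sq (2 * Real.pi * (∑ j ∈ e, α j) / m)]
      have : w e = -1 := by
        apply Complex.ext <;> simp [hre1, him0]
      exact (hDw e).mp this
    obtain ⟨t, ht⟩ := (Int.modEq_iff_dvd).mp hmod
    have : (m : ℤ) = 2 * (∑ j ∈ e, α j) + 2 * m * t := by linarith
    have hev : Even (m : ℤ) := ⟨(∑ j ∈ e, α j) + m * t, by linarith⟩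
    exact Int.even_coe_nat m |>.mp hev
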